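/- Suppose C_I < βA/((μ+r)(μ+r+ρ)) and (μ²/(μ+r))·(√(β/(μσm) + 1/σs) − √(1/σs))² < C_I < β²σs/((μ+r)σm²). Define E* = ((μ+β+ρ)/σm, μ(R0−1)/σm, μβ(R0−1)/(σm(μ+r))) and, for i = 1, 2, Ei = (Si, μR0/σm − μSi/(μ+β+ρ), βR0/σm − βSi/(μ+β+ρ) − rC_I/μ) with S1 = ((μ+β+ρ)/(2σm))(R0 − p + q − √D1), S2 = ((μ+β+ρ)/(2σm))(R0 − p + q + √D1), D1 = (R0−p−q)² − 4pq. Then: if 1 < R0 < (√p+√q)², the set of endemic equilibria equals {E*}; if (√p+√q)² ≤ R0 < 1 + M, it equals {E*, E1, E2}; if R0 = 1 + M, it equals {E*, E1}; and if R0 > 1 + M, it equals {E1}. -/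

import Mathlib

/-- An endemic equilibrium of the disease-severity-structured model. -/
def IsEndemicEquilibrium (A μ ρ r β σm σs CI : ℝ) (x : ℝ × ℝ × ℝ) : Prop :=
  0 < x.1 ∧ 0 < x.2.1 ∧ 0 < x.2.2 ∧
  A - σm * x.1 * x.2.1 - σs * x.1 * max 0 (x.2.2 - CI) - μ * x.1 = 0 ∧
  σm * x.1 * x.2.1 + σs * x.1 * max 0 (x.2.2 - CI) - (μ + β + ρ) * x.2.1 = 0 ∧
  β * x.2.1 - min (r * x.2.2) (r * CI) - μ * x.2.2 = 0

set_option maxHeartbeats 2000000 in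
/-- Theorem 2.2 of the paper. -/
theorem stmt11 (A μ ρ r β σm σs CI : ℝ)
    (hA : 0 < A) (hμ : 0 < μ) (hρ : 0 < ρ) (hr : 0 < r) (hβ : 0 < β)
    (hσm : 0 < σm) (hσs : 0 < σs) (hCI : 0 < CI)
    (R0 p q M : ℝ)
    (hR0 : R0 = A * σm / (μ * (μ + β + ρ)))
    (hp : p = (μ + r) * σm * σs * CI / (μ * (μ * σm + β * σs)))
    (hq : q = μ * σm / (μ * σm + β * σs))
    (hM : M = σm * (μ + r) * CI / (μ * β))
    (hsmall : CI < β * A / ((μ + r) * (μ + r + ρ)))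
    (hlow : μ ^ 2 / (μ + r)
      * (Real.sqrt (β / (μ * σm) + 1 / σs) - Real.sqrt (1 / σs)) ^ 2 < CI)
    (hhigh : CI < β ^ 2 * σs / ((μ + r) * σm ^ 2))
    (D1 S1 S2 : ℝ)
    (hD1 : D1 = (R0 - p - q) ^ 2 - 4 * p * q)
    (hS1 : S1 = (μ + β + ρ) / (2 * σm) * (R0 - p + q - Real.sqrt D1))
    (hS2 : S2 = (μ + β + ρ) / (2 * σm) * (R0 - p + q + Real.sqrt D1))
    (Estar E1 E2 : ℝ × ℝ × ℝ)
    (hEstar : Estar = ((μ + β + ρ) / σm, μ * (R0 - 1) / σm,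
      μ * β * (R0 - 1) / (σm * (μ + r))))
    (hE1 : E1 = (S1, μ * R0 / σm - μ * S1 / (μ + β + ρ),
      β * R0 / σm - β * S1 / (μ + β + ρ) - r * CI / μ))
    (hE2 : E2 = (S2, μ * R0 / σm - μ * S2 / (μ + β + ρ),
      β * R0 / σm - β * S2 / (μ + β + ρ) - r * CI / μ)) :
    (1 < R0 → R0 < (Real.sqrt p + Real.sqrt q) ^ 2 →
      {x : ℝ × ℝ × ℝ | IsEndemicEquilibrium A μ ρ r β σm σs CI x} = {Estar}) ∧
    ((Real.sqrt p + Real.sqrt q) ^ 2 ≤ R0 → R0 < 1 + M →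
      {x : ℝ × ℝ × ℝ | IsEndemicEquilibrium A μ ρ r β σm σs CI x}
        = {Estar, E1, E2}) ∧
    (R0 = 1 + M →
      {x : ℝ × ℝ × ℝ | IsEndemicEquilibrium A μ ρ r β σm σs CI x}
        = {Estar, E1}) ∧
    (R0 > 1 + M →
      {x : ℝ × ℝ × ℝ | IsEndemicEquilibrium A μ ρ r β σm σs CI x} = {E1}) := by
  -- ======================= basic positivity and cleared identities ============
  have hk : (0:ℝ) < μ + β + ρ := by linarith
  have hD : (0:ℝ) < μ * σm + β * σs := by positivity
  have hμr : (0:ℝ) < μ + r := by linarith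
  have hk0 : (μ + β + ρ) ≠ 0 := hk.ne'
  have hμ0 : μ ≠ 0 := hμ.ne'
  have hσm0 : σm ≠ 0 := hσm.ne'
  have hA' : A * σm = R0 * (μ * (μ + β + ρ)) := by rw [hR0]; field_simp
  have hp' : p * (μ * (μ * σm + β * σs)) = (μ + r) * σm * σs * CI := by rw [hp]; field_simp
  have hq' : q * (μ * σm + β * σs) = μ * σm := by rw [hq]; field_simp
  have hM' : M * (μ * β) = σm * (μ + r) * CI := by rw [hM]; field_simp
  have hppos : 0 < p := by rw [hp]; positivity
  have hqpos : 0 < q := by rw [hq]; positivity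
  have hMpos : 0 < M := by rw [hM]; positivity
  have hq1 : q < 1 := by
    rw [hq, div_lt_one hD]; linarith [mul_pos hβ hσs]
  have hR0pos : 0 < R0 := by rw [hR0]; positivity
  have hpMq : p = M * (1 - q) := by rw [hp, hq, hM]; field_simp; ring
  have hkey : M * q < 1 - q := by
    have hDμβ : (0:ℝ) < (μ*σm+β*σs)*(μ*β) := by positivity
    have h3 : M*q*((μ*σm+β*σs)*(μ*β)) = μ*(CI*((μ+r)*σm^2)) := by
      rw [hM, hq]; field_simp
    have h4 : (1-q)*((μ*σm+β*σs)*(μ*β)) = μ*(β^2*σs) := by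
      rw [hq]; field_simp; ring
    have h := hhigh
    rw [lt_div_iff₀ (by positivity)] at h
    have h5 : M*q*((μ*σm+β*σs)*(μ*β)) < (1-q)*((μ*σm+β*σs)*(μ*β)) := by
      rw [h3, h4]; linarith [mul_lt_mul_of_pos_left h hμ]
    exact lt_of_mul_lt_mul_right h5 hDμβ.le
  -- ======================= square-root facts ==================================
  set s := Real.sqrt (μ * σm * (μ * σm + β * σs)) with hs
  have hs2 : s ^ 2 = μ * σm * (μ * σm + β * σs) := Real.sq_sqrt (by positivity)
  have hsnn : 0 ≤ s := Real.sqrt_nonneg _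
  have hsqq : Real.sqrt q = s / (μ * σm + β * σs) := by
    have h1 : q = (s / (μ * σm + β * σs)) ^ 2 := by
      rw [div_pow, hs2, hq]; field_simp
    rw [h1, Real.sqrt_sq (by positivity)]
  have hsq2 : Real.sqrt q ^ 2 = q := Real.sq_sqrt hqpos.le
  have hsp2 : Real.sqrt p ^ 2 = p := Real.sq_sqrt hppos.le
  have hX2 : (Real.sqrt (β / (μ * σm) + 1 / σs)) ^ 2 = β / (μ * σm) + 1 / σs :=
    Real.sq_sqrt (by positivity)
  have hY2 : (Real.sqrt (1 / σs)) ^ 2 = 1 / σs := Real.sq_sqrt (by positivity)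
  have hXY : Real.sqrt (β / (μ * σm) + 1 / σs) * Real.sqrt (1 / σs)
      = s / (μ * σm * σs) := by
    rw [← Real.sqrt_mul (by positivity)]
    have h1 : (β / (μ * σm) + 1 / σs) * (1 / σs) = (s / (μ * σm * σs)) ^ 2 := by
      rw [div_pow, hs2]; field_simp; ring
    rw [h1, Real.sqrt_sq (by positivity)]
  have hExp : μ ^ 2 / (μ + r)
      * (Real.sqrt (β / (μ * σm) + 1 / σs) - Real.sqrt (1 / σs)) ^ 2
      = (μ * (β * σs + 2 * (μ * σm) - 2 * s)) / ((μ + r) * σm * σs) := by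
    rw [sub_sq, hX2, hY2, mul_assoc, hXY]; field_simp; ring
  rw [hExp, div_lt_iff₀ (by positivity)] at hlow
  have hT : (1 + q) * (μ * σm + β * σs) < p * (μ * σm + β * σs) + 2 * s := by
    have e2 : (1 + q) * (μ * σm + β * σs) * μ = μ * (β * σs) + 2 * (μ * (μ * σm)) := by
      linear_combination μ * hq'
    have e3 : (p * (μ * σm + β * σs) + 2 * s) * μ = CI * ((μ + r) * σm * σs) + 2 * (s * μ) := by
      linear_combination hp'
    have h4 : (1 + q) * (μ * σm + β * σs) * μ < (p * (μ * σm + β * σs) + 2 * s) * μ := by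
      rw [e2, e3]; linarith [hlow]
    exact lt_of_mul_lt_mul_right h4 hμ.le
  have hp1q : (1 - Real.sqrt q) ^ 2 < p := by
    have h8 : (1 - Real.sqrt q) ^ 2 * (μ * σm + β * σs)
        = (1 + q) * (μ * σm + β * σs) - 2 * s := by
      rw [sub_sq, hsq2, hsqq]; field_simp; ring
    have h9 : (1 - Real.sqrt q) ^ 2 * (μ * σm + β * σs) < p * (μ * σm + β * σs) := by
      rw [h8]; linarith
    exact lt_of_mul_lt_mul_right h9 hD.le
  have hq1' : Real.sqrt q ≤ 1 := by
    rw [show (1:ℝ) = Real.sqrt 1 by simp]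
    exact Real.sqrt_le_sqrt hq1.le
  have hW1 : 1 < (Real.sqrt p + Real.sqrt q) ^ 2 := by
    have h10 : 1 - Real.sqrt q < Real.sqrt p :=
      (Real.lt_sqrt (by linarith)).mpr hp1q
    have h11 : 1 < Real.sqrt p + Real.sqrt q := by linarith
    calc (1:ℝ) = 1 ^ 2 := by norm_num
      _ < (Real.sqrt p + Real.sqrt q) ^ 2 := by
          apply pow_lt_pow_left₀ h11 (by norm_num)
          norm_num
  set g := Real.sqrt p * Real.sqrt q with hg
  have hg2 : g ^ 2 = p * q := by rw [hg, mul_pow, hsp2, hsq2]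
  have hgpos : 0 < g := by
    have := Real.sqrt_pos.2 hppos; have := Real.sqrt_pos.2 hqpos; positivity
  have hWexp : (Real.sqrt p + Real.sqrt q) ^ 2 = p + q + 2 * g := by
    rw [add_sq, hsp2, hsq2, hg]; ring
  have hMqg : M * q < g := by
    have h11 : (M * q) ^ 2 < g ^ 2 := by
      rw [hg2, hpMq]
      linarith [mul_lt_mul_of_pos_left hkey (mul_pos hMpos hqpos)]
    exact lt_of_pow_lt_pow_left₀ 2 hgpos.le h11
  have hWv : M + M * q + q < p + q + 2 * g := by linarith [hMqg, hpMq]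
  have hWM : p + q + 2 * g < 1 + M := by
    have h12 : (2 * g) ^ 2 < ((1 - q) + M * q) ^ 2 := by
      rw [mul_pow, hg2, hpMq]
      linarith [mul_pos (sub_pos.2 hkey) (sub_pos.2 hkey)]
    have h13 : 2 * g < (1 - q) + M * q :=
      lt_of_pow_lt_pow_left₀ 2 (by linarith [mul_pos hMpos hqpos]) h12
    linarith [hpMq]
  -- ======================= characterization of equilibria ====================
  have key : ∀ x : ℝ × ℝ × ℝ, IsEndemicEquilibrium A μ ρ r β σm σs CI x ↔
      ((x = Estar ∧ 1 < R0 ∧ R0 ≤ 1 + M) ∨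
       (0 < x.1 ∧ (μ + r) * CI * (μ + β + ρ) < β * (A - μ * x.1) ∧
        (μ * σm + β * σs) * μ * x.1 ^ 2
          - ((μ * σm + β * σs) * A + μ ^ 2 * (μ + β + ρ)
              - σs * (μ + r) * CI * (μ + β + ρ)) * x.1
          + μ * (μ + β + ρ) * A = 0 ∧
        x.2.1 = (A - μ * x.1) / (μ + β + ρ) ∧
        x.2.2 = (β * ((A - μ * x.1) / (μ + β + ρ)) - r * CI) / μ)) := by
    rintro ⟨S, Im, Is⟩
    simp only [IsEndemicEquilibrium, hEstar, Prod.mk.injEq]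
    constructor
    · rintro ⟨hS, hIm, hIs, e1, e2, e3⟩
      by_cases hcase : Is ≤ CI
      · left
        have hmax : max 0 (Is - CI) = 0 := max_eq_left (by linarith)
        have hmin : min (r * Is) (r * CI) = r * Is :=
          min_eq_left (mul_le_mul_of_nonneg_left hcase hr.le)
        rw [hmax] at e1 e2
        rw [hmin] at e3
        have hSeq : σm * S = μ + β + ρ := by
          have h1 : (σm * S - (μ + β + ρ)) * Im = 0 := by linear_combination e2
          rcases mul_eq_zero.1 h1 with h | h
          · linarith
          · exact absurd h (ne_of_gt hIm)
        have hSval : S = (μ + β + ρ) / σm := by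
          field_simp; linarith [hSeq]
        have hImval' : Im * σm = μ * (R0 - 1) := by
          have h3 : Im * σm * (μ + β + ρ) = μ * (R0 - 1) * (μ + β + ρ) := by
            linear_combination (-σm) * e1 + (-(σm * Im + μ)) * hSeq + hA'
          exact mul_right_cancel₀ hk0 h3
        have hImval : Im = μ * (R0 - 1) / σm := by
          rw [eq_div_iff hσm0]; exact hImval'
        have hIsval : Is = μ * β * (R0 - 1) / (σm * (μ + r)) := by
          have h2 : Is * (μ + r) = β * Im := by linear_combination -e3
          rw [eq_div_iff (by positivity)]
          linear_combination σm * h2 + β * hImval'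
        have hR0gt1 : 1 < R0 := by
          rw [hImval] at hIm
          rcases div_pos_iff.mp hIm with ⟨h3, _⟩ | ⟨_, h4⟩
          · by_contra hc
            push_neg at hc
            linarith [mul_nonpos_of_nonneg_of_nonpos hμ.le
              (show R0 - 1 ≤ 0 by linarith)]
          · linarith
        refine ⟨⟨hSval, hImval, hIsval⟩, hR0gt1, ?_⟩
        by_contra hc
        push_neg at hc
        have h5 : CI * (σm * (μ + r)) < μ * β * (R0 - 1) := by
          have h6 : M * (μ * β) < (R0 - 1) * (μ * β) :=
            mul_lt_mul_of_pos_right (by linarith) (by positivity)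
          linarith [hM', h6]
        rw [hIsval] at hcase
        rw [div_le_iff₀ (by positivity)] at hcase
        linarith
      · right
        push_neg at hcase
        have hmax : max 0 (Is - CI) = Is - CI := max_eq_right (by linarith)
        have hmin : min (r * Is) (r * CI) = r * CI :=
          min_eq_right (mul_le_mul_of_nonneg_left hcase.le hr.le)
        rw [hmax] at e1 e2
        rw [hmin] at e3
        have hsum : A - μ * S - (μ + β + ρ) * Im = 0 := by linarith [e1, e2]
        have hImv : Im = (A - μ * S) / (μ + β + ρ) := by
          field_simp; linarith [hsum]
        have hIsv : Is = (β * ((A - μ * S) / (μ + β + ρ)) - r * CI) / μ := by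
          rw [← hImv]
          field_simp
          linarith [e3]
        have hIsgt : (μ + r) * CI * (μ + β + ρ) < β * (A - μ * S) := by
          have h7 : CI < (β * ((A - μ * S) / (μ + β + ρ)) - r * CI) / μ := by
            rw [← hIsv]; exact hcase
          rw [lt_div_iff₀ hμ, lt_sub_iff_add_lt, mul_div_assoc', lt_div_iff₀ hk] at h7
          linarith [h7]
        refine ⟨hS, hIsgt, ?_, hImv, hIsv⟩
        rw [hImv, hIsv] at e2
        field_simp at e2
        have h9 : ((μ * σm + β * σs) * μ * S ^ 2
            - ((μ * σm + β * σs) * A + μ ^ 2 * (μ + β + ρ)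
                - σs * (μ + r) * CI * (μ + β + ρ)) * S
            + μ * (μ + β + ρ) * A) * (μ + β + ρ) = 0 := by linear_combination -(μ + β + ρ) * e2
        rcases mul_eq_zero.1 h9 with h | h
        · exact h
        · exact absurd h hk0
    · rintro (⟨⟨hSv, hImv, hIsv⟩, hR01, hR0M⟩ | ⟨hS0, hIsgt, hquad, hImv, hIsv⟩)
      · subst hSv hImv hIsv
        have hR0m1 : (0:ℝ) < R0 - 1 := by linarith
        have hIsCI : μ * β * (R0 - 1) / (σm * (μ + r)) ≤ CI := by
          rw [div_le_iff₀ (by positivity)]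
          have h6 : (R0 - 1) * (μ * β) ≤ M * (μ * β) :=
            mul_le_mul_of_nonneg_right (by linarith) (by positivity)
          linarith [hM', h6]
        have hmax : max 0 (μ * β * (R0 - 1) / (σm * (μ + r)) - CI) = 0 :=
          max_eq_left (by linarith)
        have hmin : min (r * (μ * β * (R0 - 1) / (σm * (μ + r)))) (r * CI)
            = r * (μ * β * (R0 - 1) / (σm * (μ + r))) :=
          min_eq_left (mul_le_mul_of_nonneg_left hIsCI hr.le)
        refine ⟨by positivity, by positivity, by positivity, ?_, ?_, ?_⟩
        · rw [hmax]
          field_simp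
          linear_combination hA'
        · rw [hmax]
          field_simp
          ring
        · rw [hmin]
          field_simp
          ring
      · subst hImv hIsv
        have hApos : 0 < A - μ * S := by
          by_contra hc
          push_neg at hc
          linarith [hIsgt, mul_pos (mul_pos hμr hCI) hk,
            mul_nonpos_of_nonneg_of_nonpos hβ.le (show A - μ * S ≤ 0 by linarith)]
        have hImpos : 0 < (A - μ * S) / (μ + β + ρ) := div_pos hApos hk
        have hIsCI : CI < (β * ((A - μ * S) / (μ + β + ρ)) - r * CI) / μ := by
          rw [lt_div_iff₀ hμ, lt_sub_iff_add_lt, mul_div_assoc', lt_div_iff₀ hk]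
          linarith [hIsgt]
        have hmax : max 0 ((β * ((A - μ * S) / (μ + β + ρ)) - r * CI) / μ - CI)
            = (β * ((A - μ * S) / (μ + β + ρ)) - r * CI) / μ - CI :=
          max_eq_right (by linarith)
        have hmin : min (r * ((β * ((A - μ * S) / (μ + β + ρ)) - r * CI) / μ)) (r * CI)
            = r * CI :=
          min_eq_right (mul_le_mul_of_nonneg_left hIsCI.le hr.le)
        refine ⟨hS0, hImpos, by linarith [hIsCI, hCI], ?_, ?_, ?_⟩
        · rw [hmax]
          field_simp
          linear_combination hquad
        · rw [hmax]
          field_simp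
          linear_combination -hquad
        · rw [hmin]
          field_simp
          ring
  -- ======================= bridges ===========================================
  -- scaled quadratic: connect to (p, q, R0) form
  have hQP : ∀ y : ℝ, ((μ * σm + β * σs) * μ * y ^ 2
      - ((μ * σm + β * σs) * A + μ ^ 2 * (μ + β + ρ)
          - σs * (μ + r) * CI * (μ + β + ρ)) * y
      + μ * (μ + β + ρ) * A) * σm ^ 2
      = ((μ * σm + β * σs) * μ)
        * (σm ^ 2 * y ^ 2 - (μ + β + ρ) * σm * (R0 - p + q) * y
            + (μ + β + ρ) ^ 2 * (R0 * q)) := by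
    intro y
    linear_combination (-((μ + β + ρ) * σm * y)) * hp'
      + ((μ + β + ρ) * σm * μ * y - μ * (μ + β + ρ) ^ 2 * R0) * hq'
      + (-(σm * (μ * σm + β * σs) * y) + μ * (μ + β + ρ) * σm) * hA'
  -- the severity-overflow condition in (R0, M) form
  have hcond : ∀ y : ℝ, ((μ + r) * CI * (μ + β + ρ) < β * (A - μ * y)
      ↔ σm * y < (μ + β + ρ) * (R0 - M)) := by
    intro y
    have hb1 : A * σm * β = R0 * (μ * (μ + β + ρ)) * β := by linear_combination β * hA'
    have hb2 : M * (μ * β) * (μ + β + ρ) = σm * (μ + r) * CI * (μ + β + ρ) := by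
      linear_combination (μ + β + ρ) * hM'
    constructor
    · intro h
      have h2 := mul_lt_mul_of_pos_right h hσm
      have h3 : σm * y * (μ * β) < (μ + β + ρ) * (R0 - M) * (μ * β) := by
        linarith [h2, hb1, hb2]
      exact lt_of_mul_lt_mul_right h3 (by positivity)
    · intro h
      have h2 := mul_lt_mul_of_pos_right h (mul_pos hμ hβ)
      have h3 : (μ + r) * CI * (μ + β + ρ) * σm < β * (A - μ * y) * σm := by
        linarith [h2, hb1, hb2]
      exact lt_of_mul_lt_mul_right h3 hσm.le
  -- component identities
  have hImeq : ∀ y : ℝ, (A - μ * y) / (μ + β + ρ)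
      = μ * R0 / σm - μ * y / (μ + β + ρ) := by
    intro y
    field_simp
    linear_combination hA'
  have hIseq : ∀ y : ℝ, (β * ((A - μ * y) / (μ + β + ρ)) - r * CI) / μ
      = β * R0 / σm - β * y / (μ + β + ρ) - r * CI / μ := by
    intro y
    field_simp
    linear_combination β * hA'
  -- scaled root values
  have hS1σ : σm * S1 = (μ + β + ρ) * (R0 - p + q - Real.sqrt D1) / 2 := by
    rw [hS1]; field_simp
  have hS2σ : σm * S2 = (μ + β + ρ) * (R0 - p + q + Real.sqrt D1) / 2 := by
    rw [hS2]; field_simp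
  have hsumv : S1 + S2 = (μ + β + ρ) / σm * (R0 - p + q) := by
    rw [hS1, hS2]; ring
  have hd0 : 0 ≤ Real.sqrt D1 := Real.sqrt_nonneg _
  have hS1S2 : S1 ≤ S2 := by
    rw [hS1, hS2]
    have hKpos : (0:ℝ) < (μ + β + ρ) / (2 * σm) := by positivity
    have h := mul_nonneg hKpos.le (show (0:ℝ) ≤ 2 * Real.sqrt D1 by linarith)
    linarith [h]
  -- under 0 ≤ D1: product of roots and root factorization of the quadratic
  have hprodv : 0 ≤ D1 → S1 * S2 = ((μ + β + ρ) / σm) ^ 2 * (R0 * q) := by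
    intro hD1nn
    have hsd2 : Real.sqrt D1 ^ 2 = D1 := Real.sq_sqrt hD1nn
    rw [hS1, hS2]
    linear_combination (-(((μ + β + ρ) / (2 * σm)) ^ 2)) * hsd2
      + (-(((μ + β + ρ) / (2 * σm)) ^ 2)) * hD1
  have hfacQ : 0 ≤ D1 → ∀ y : ℝ, ((μ * σm + β * σs) * μ * y ^ 2
      - ((μ * σm + β * σs) * A + μ ^ 2 * (μ + β + ρ)
          - σs * (μ + r) * CI * (μ + β + ρ)) * y
      + μ * (μ + β + ρ) * A = 0 ↔ (y = S1 ∨ y = S2)) := by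
    intro hD1nn y
    have hq1'' : (y - S1) * (y - S2)
        = y ^ 2 - ((μ + β + ρ) / σm * (R0 - p + q)) * y
          + ((μ + β + ρ) / σm) ^ 2 * (R0 * q) := by
      linear_combination (-y) * hsumv + hprodv hD1nn
    have hss : σm ^ 2 * y ^ 2 - (μ + β + ρ) * σm * (R0 - p + q) * y
        + (μ + β + ρ) ^ 2 * (R0 * q) = σm ^ 2 * ((y - S1) * (y - S2)) := by
      rw [hq1'']
      field_simp
    constructor
    · intro h
      have h2 : ((μ * σm + β * σs) * μ) * (σm ^ 2 * ((y - S1) * (y - S2))) = 0 := by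
        rw [← hss, ← hQP y, h, zero_mul]
      have h3 : (y - S1) * (y - S2) = 0 := by
        rcases mul_eq_zero.1 h2 with h4 | h4
        · exact absurd h4 (by positivity)
        · rcases mul_eq_zero.1 h4 with h5 | h5
          · exact absurd h5 (by positivity)
          · exact h5
      rcases mul_eq_zero.1 h3 with h6 | h6
      · exact Or.inl (sub_eq_zero.1 h6)
      · exact Or.inr (sub_eq_zero.1 h6)
    · intro h
      have h3 : (y - S1) * (y - S2) = 0 := by
        rcases h with h | h
        · rw [h, sub_self, zero_mul]
        · rw [h, sub_self, mul_zero]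
      have h2 : ((μ * σm + β * σs) * μ * y ^ 2
          - ((μ * σm + β * σs) * A + μ ^ 2 * (μ + β + ρ)
              - σs * (μ + r) * CI * (μ + β + ρ)) * y
          + μ * (μ + β + ρ) * A) * σm ^ 2 = 0 := by
        rw [hQP y, hss, h3, mul_zero, mul_zero]
      rcases mul_eq_zero.1 h2 with h4 | h4
      · exact h4
      · exact absurd h4 (by positivity)
  -- membership of E1 / E2 given the needed inequalities
  have hmemE : ∀ Si : ℝ, Si = S1 ∨ Si = S2 → 0 ≤ D1 → 0 < Si →
      σm * Si < (μ + β + ρ) * (R0 - M) →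
      IsEndemicEquilibrium A μ ρ r β σm σs CI
        (Si, μ * R0 / σm - μ * Si / (μ + β + ρ),
          β * R0 / σm - β * Si / (μ + β + ρ) - r * CI / μ) := by
    intro Si hSi hD1nn hSipos hSisc
    rw [key]
    right
    refine ⟨hSipos, (hcond Si).2 hSisc, (hfacQ hD1nn Si).2 hSi, ?_, ?_⟩
    · exact (hImeq Si).symm
    · exact (hIseq Si).symm
  -- ======================= the four regimes ==================================
  have two_pos' : (0:ℝ) < 2 := by norm_num
  refine ⟨?_, ?_, ?_, ?_⟩
  -- ---------- Regime 1 : 1 < R0 < (√p+√q)² -----------------------------------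
  · intro h1 h2
    rw [hWexp] at h2
    ext x
    simp only [Set.mem_setOf_eq, Set.mem_singleton_iff]
    rw [key x]
    constructor
    · rintro (⟨hxE, _, _⟩ | ⟨hx0, hxc, hxq, hxI, hxJ⟩)
      · exact hxE
      · exfalso
        have h5 : σm ^ 2 * x.1 ^ 2 - (μ + β + ρ) * σm * (R0 - p + q) * x.1
            + (μ + β + ρ) ^ 2 * (R0 * q) = 0 := by
          have h6 : ((μ * σm + β * σs) * μ) * (σm ^ 2 * x.1 ^ 2
              - (μ + β + ρ) * σm * (R0 - p + q) * x.1
              + (μ + β + ρ) ^ 2 * (R0 * q)) = 0 := by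
            rw [← hQP x.1, hxq, zero_mul]
          rcases mul_eq_zero.1 h6 with h7 | h7
          · exact absurd h7 (by positivity)
          · exact h7
        have hD1nn : 0 ≤ D1 := by
          have h6 : (2 * σm * x.1 - (μ + β + ρ) * (R0 - p + q)) ^ 2
              = (μ + β + ρ) ^ 2 * D1 := by
            rw [hD1]; linear_combination 4 * h5
          by_contra hcc
          push_neg at hcc
          have h7 : (μ + β + ρ) ^ 2 * D1 < 0 := mul_neg_of_pos_of_neg (by positivity) hcc
          linarith [sq_nonneg (2 * σm * x.1 - (μ + β + ρ) * (R0 - p + q)), h6]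
        have hsq : 0 ≤ (R0 - p - q) ^ 2 - 4 * (p * q) := by
          rw [hD1] at hD1nn; linarith [hD1nn]
        have hneg : R0 - p - q ≤ -(2 * g) := by
          by_contra hcc
          push_neg at hcc
          have h8 : 0 < 2 * g - (R0 - p - q) := by linarith
          have h9 : 0 < (R0 - p - q) + 2 * g := by linarith
          have h10 := mul_pos h8 h9
          linarith [h10, hg2, hsq]
        have hR0small : R0 < M + M * q + q := by
          linarith [hneg, hpMq, hgpos, mul_pos hMpos hqpos]
        have hxroot := (hfacQ hD1nn x.1).1 hxq
        have hxsc : σm * x.1 < (μ + β + ρ) * (R0 - M) := (hcond x.1).1 hxc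
        have hD1leT2 : D1 ≤ (R0 - M - M * q - q) ^ 2 := by
          have h10 : (R0 - M - M * q - q) ^ 2 - D1 = 4 * q * M * (1 + M - R0) := by
            rw [hD1, hpMq]; ring
          have h11 : (0:ℝ) < 1 + M - R0 := by linarith [hWM]
          linarith [h10,
            mul_pos (mul_pos (mul_pos (by norm_num : (0:ℝ) < 4) hqpos) hMpos) h11]
        have hdT : Real.sqrt D1 ≤ -(R0 - M - M * q - q) := by
          calc Real.sqrt D1 ≤ Real.sqrt ((R0 - M - M * q - q) ^ 2) :=
                Real.sqrt_le_sqrt hD1leT2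
            _ = |R0 - M - M * q - q| := Real.sqrt_sq_eq_abs _
            _ = -(R0 - M - M * q - q) := abs_of_neg (by linarith [hR0small])
        have hS1ge : (μ + β + ρ) * (R0 - M) ≤ σm * S1 := by
          rw [hS1σ, le_div_iff₀ two_pos']
          have h12 : 2 * (R0 - M) ≤ R0 - p + q - Real.sqrt D1 := by
            linarith [hdT, hpMq]
          have h13 := mul_le_mul_of_nonneg_left h12 hk.le
          linarith
        have hS2ge : σm * S1 ≤ σm * S2 := mul_le_mul_of_nonneg_left hS1S2 hσm.le
        rcases hxroot with h13 | h13 <;> rw [h13] at hxsc <;> linarith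
    · rintro rfl
      exact Or.inl ⟨rfl, h1, by linarith [hWM]⟩
  -- ---------- Regime 2 : (√p+√q)² ≤ R0 < 1 + M --------------------------------
  · intro h1 h2
    have hR0gt1 : 1 < R0 := lt_of_lt_of_le hW1 h1
    rw [hWexp] at h1
    have hD1nn : 0 ≤ D1 := by
      have hsq : (2 * g) ^ 2 ≤ (R0 - p - q) ^ 2 :=
        pow_le_pow_left₀ (by positivity) (by linarith) 2
      rw [hD1]; linarith [hsq, hg2]
    have hsd2 : Real.sqrt D1 ^ 2 = D1 := Real.sq_sqrt hD1nn
    have hXpos : 0 < R0 - p + q := by linarith [hgpos, hqpos]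
    have hdX : Real.sqrt D1 < R0 - p + q := by
      have h3 : Real.sqrt D1 ^ 2 < (R0 - p + q) ^ 2 := by
        rw [hsd2, hD1]; linarith [mul_pos hR0pos hqpos]
      exact lt_of_pow_lt_pow_left₀ 2 hXpos.le h3
    have hS1pos : 0 < S1 := by
      rw [hS1]; exact mul_pos (by positivity) (by linarith)
    have hS2pos : 0 < S2 := lt_of_lt_of_le hS1pos hS1S2
    have hTpos : 0 < R0 - M - M * q - q := by linarith [hWv]
    have hdT : Real.sqrt D1 < R0 - M - M * q - q := by
      have h10 : (R0 - M - M * q - q) ^ 2 - D1 = 4 * q * M * (1 + M - R0) := by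
        rw [hD1, hpMq]; ring
      have h11 : (0:ℝ) < 1 + M - R0 := by linarith
      have h12 : Real.sqrt D1 ^ 2 < (R0 - M - M * q - q) ^ 2 := by
        rw [hsd2]
        linarith [h10,
          mul_pos (mul_pos (mul_pos (by norm_num : (0:ℝ) < 4) hqpos) hMpos) h11]
      exact lt_of_pow_lt_pow_left₀ 2 hTpos.le h12
    have hS2sc : σm * S2 < (μ + β + ρ) * (R0 - M) := by
      rw [hS2σ, div_lt_iff₀ two_pos']
      have h12 : R0 - p + q + Real.sqrt D1 < 2 * (R0 - M) := by linarith [hdT, hpMq]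
      have h13 := mul_lt_mul_of_pos_left h12 hk
      linarith
    have hS1sc : σm * S1 < (μ + β + ρ) * (R0 - M) := by
      have h14 := mul_le_mul_of_nonneg_left hS1S2 hσm.le
      linarith
    ext x
    simp only [Set.mem_setOf_eq, Set.mem_insert_iff, Set.mem_singleton_iff]
    rw [key x]
    constructor
    · rintro (⟨hxE, _, _⟩ | ⟨hx0, hxc, hxq, hxI, hxJ⟩)
      · exact Or.inl hxE
      · rcases (hfacQ hD1nn x.1).1 hxq with h13 | h13
        · right; left
          have hxeq : x = (x.1, x.2.1, x.2.2) := rfl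
          rw [hxeq, hE1]
          simp only [Prod.mk.injEq]
          exact ⟨h13, by rw [hxI, h13]; exact hImeq S1, by rw [hxJ, h13]; exact hIseq S1⟩
        · right; right
          have hxeq : x = (x.1, x.2.1, x.2.2) := rfl
          rw [hxeq, hE2]
          simp only [Prod.mk.injEq]
          exact ⟨h13, by rw [hxI, h13]; exact hImeq S2, by rw [hxJ, h13]; exact hIseq S2⟩
    · rintro (rfl | rfl | rfl)
      · exact Or.inl ⟨rfl, hR0gt1, h2.le⟩
      · have hm := hmemE S1 (Or.inl rfl) hD1nn hS1pos hS1sc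
        rw [key] at hm
        rw [hE1]
        exact hm
      · have hm := hmemE S2 (Or.inr rfl) hD1nn hS2pos hS2sc
        rw [key] at hm
        rw [hE2]
        exact hm
  -- ---------- Regime 3 : R0 = 1 + M -------------------------------------------
  · intro h
    have hD1v : D1 = (1 - q - M * q) ^ 2 := by rw [hD1, h, hpMq]; ring
    have hD1nn : 0 ≤ D1 := by rw [hD1v]; positivity
    have hsd : Real.sqrt D1 = 1 - q - M * q := by
      rw [hD1v]; exact Real.sqrt_sq (by linarith [hkey])
    have hS1v : σm * S1 = (μ + β + ρ) * (q * (1 + M)) := by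
      rw [hS1σ, hsd, h, hpMq]; ring
    have hS2v : σm * S2 = (μ + β + ρ) * (R0 - M) := by
      rw [hS2σ, hsd, h, hpMq]; ring
    have hS1pos : 0 < S1 := by
      have h7 : 0 < σm * S1 := by rw [hS1v]; positivity
      by_contra hcc
      push_neg at hcc
      linarith [mul_nonpos_of_nonneg_of_nonpos hσm.le hcc]
    have hS1sc : σm * S1 < (μ + β + ρ) * (R0 - M) := by
      rw [hS1v, h]
      have h8 : q * (1 + M) < 1 := by linarith [hkey]
      have h9 := mul_lt_mul_of_pos_left h8 hk
      linarith
    ext x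
    simp only [Set.mem_setOf_eq, Set.mem_insert_iff, Set.mem_singleton_iff]
    rw [key x]
    constructor
    · rintro (⟨hxE, _, _⟩ | ⟨hx0, hxc, hxq, hxI, hxJ⟩)
      · exact Or.inl hxE
      · rcases (hfacQ hD1nn x.1).1 hxq with h13 | h13
        · right
          have hxeq : x = (x.1, x.2.1, x.2.2) := rfl
          rw [hxeq, hE1]
          simp only [Prod.mk.injEq]
          exact ⟨h13, by rw [hxI, h13]; exact hImeq S1, by rw [hxJ, h13]; exact hIseq S1⟩
        · exfalso
          have hxsc : σm * x.1 < (μ + β + ρ) * (R0 - M) := (hcond x.1).1 hxc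
          rw [h13] at hxsc
          linarith [hS2v]
    · rintro (rfl | rfl)
      · exact Or.inl ⟨rfl, by rw [h]; linarith, h.le⟩
      · have hm := hmemE S1 (Or.inl rfl) hD1nn hS1pos hS1sc
        rw [key] at hm
        rw [hE1]
        exact hm
  -- ---------- Regime 4 : R0 > 1 + M -------------------------------------------
  · intro h
    have h11 : (0:ℝ) < R0 - 1 - M := by linarith
    have hD1v : D1 = (R0 - M - M * q - q) ^ 2 + 4 * q * M * (R0 - 1 - M) := by
      rw [hD1, hpMq]; ring
    have hD1pos : 0 < D1 := by
      rw [hD1v]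
      have h12 := mul_pos (mul_pos (mul_pos (by norm_num : (0:ℝ) < 4) hqpos) hMpos) h11
      linarith [sq_nonneg (R0 - M - M * q - q)]
    have hD1nn : 0 ≤ D1 := hD1pos.le
    have habs : |R0 - M - M * q - q| < Real.sqrt D1 := by
      have h12 : (R0 - M - M * q - q) ^ 2 < D1 := by
        rw [hD1v]
        linarith [mul_pos (mul_pos (mul_pos (by norm_num : (0:ℝ) < 4) hqpos) hMpos) h11]
      calc |R0 - M - M * q - q| = Real.sqrt ((R0 - M - M * q - q) ^ 2) :=
            (Real.sqrt_sq_eq_abs _).symm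
        _ < Real.sqrt D1 := Real.sqrt_lt_sqrt (sq_nonneg _) h12
    have hS1sc : σm * S1 < (μ + β + ρ) * (R0 - M) := by
      rw [hS1σ, div_lt_iff₀ two_pos']
      have h13 : R0 - p + q - Real.sqrt D1 < 2 * (R0 - M) := by
        linarith [habs, neg_abs_le (R0 - M - M * q - q), hpMq]
      have h14 := mul_lt_mul_of_pos_left h13 hk
      linarith
    have hS2sc : (μ + β + ρ) * (R0 - M) < σm * S2 := by
      rw [hS2σ, lt_div_iff₀ two_pos']
      have h14 : 2 * (R0 - M) < R0 - p + q + Real.sqrt D1 := by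
        linarith [habs, le_abs_self (R0 - M - M * q - q), hpMq]
      have h15 := mul_lt_mul_of_pos_left h14 hk
      linarith
    have hscpos : 0 < (μ + β + ρ) * (R0 - M) := mul_pos hk (by linarith)
    have hS2pos : 0 < S2 := by
      by_contra hcc
      push_neg at hcc
      linarith [mul_nonpos_of_nonneg_of_nonpos hσm.le hcc]
    have hS1pos : 0 < S1 := by
      have h9 : 0 < S1 * S2 := by rw [hprodv hD1nn]; positivity
      by_contra hcc
      push_neg at hcc
      linarith [mul_nonpos_of_nonpos_of_nonneg hcc hS2pos.le]
    ext x
    simp only [Set.mem_setOf_eq, Set.mem_singleton_iff]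
    rw [key x]
    constructor
    · rintro (⟨hxE, _, hxM⟩ | ⟨hx0, hxc, hxq, hxI, hxJ⟩)
      · exact absurd hxM (by linarith)
      · rcases (hfacQ hD1nn x.1).1 hxq with h13 | h13
        · have hxeq : x = (x.1, x.2.1, x.2.2) := rfl
          rw [hxeq, hE1]
          simp only [Prod.mk.injEq]
          exact ⟨h13, by rw [hxI, h13]; exact hImeq S1, by rw [hxJ, h13]; exact hIseq S1⟩
        · exfalso
          have hxsc : σm * x.1 < (μ + β + ρ) * (R0 - M) := (hcond x.1).1 hxc
          rw [h13] at hxsc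
          linarith
    · rintro rfl
      have hm := hmemE S1 (Or.inl rfl) hD1nn hS1pos hS1sc
      rw [key] at hm
      rw [hE1]
      exact hm
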